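/- Let G = (V, E, L) be a colored directed graph containing two intersecting cycles with the same coloring, i.e., periodic cycles π₁, π₂ : ℤ → V with π₁ ≠ π₂, L(π₁(i)) = L(π₂(i)) for all i, and π₁(i₀) = π₂(i₀) for some i₀. Then G has same-colored out-neighbors: there exist a node v and distinct nodes w₁ ≠ w₂ with E(v, w₁), E(v, w₂), and L(w₁) = L(w₂). -/

import Mathlib

/-- A periodic function is invariant under any integer multiple of its period. -/
lemma periodic_int_mul {V : Type*} (π : ℤ → V) (p : ℤ)
    (hp : ∀ i, π (i + p) = π i) : ∀ (m : ℤ) (i : ℤ), π (i + m * p) = π i := by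
  intro m
  induction m using Int.induction_on with
  | zero => simp
  | succ n ih =>
      intro i
      have : i + (n + 1 : ℤ) * p = (i + n * p) + p := by ring
      rw [this, hp, ih]
  | pred n ih =>
      intro i
      have h := hp (i + (-n - 1 : ℤ) * p)
      have : i + (-n - 1 : ℤ) * p + p = i + (-n : ℤ) * p := by ring
      rw [this] at h
      rw [h.symm, ih]

/-- If a colored directed graph `(V, E, L)` contains two intersecting cycles with the
same coloring (periodic cycles `π₁ ≠ π₂` with `L (π₁ i) = L (π₂ i)` for all `i`, and
`π₁ i₀ = π₂ i₀` for some `i₀`), then it has same-colored out-neighbors. -/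
theorem intersecting_cycles_give_same_colored_out_neighbors
    {V Φ : Type*} (E : V → V → Prop) (L : V → Φ)
    (π₁ π₂ : ℤ → V)
    (hedge₁ : ∀ i, E (π₁ i) (π₁ (i + 1)))
    (hper₁ : ∃ p : ℤ, 0 < p ∧ ∀ i, π₁ (i + p) = π₁ i)
    (hedge₂ : ∀ i, E (π₂ i) (π₂ (i + 1)))
    (hper₂ : ∃ p : ℤ, 0 < p ∧ ∀ i, π₂ (i + p) = π₂ i)
    (hne : π₁ ≠ π₂)
    (hcol : ∀ i, L (π₁ i) = L (π₂ i))
    (hint : ∃ i₀, π₁ i₀ = π₂ i₀) :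
    ∃ v w₁ w₂ : V, w₁ ≠ w₂ ∧ E v w₁ ∧ E v w₂ ∧ L w₁ = L w₂ := by
  by_cases hsplit : ∃ i, π₁ i = π₂ i ∧ π₁ (i + 1) ≠ π₂ (i + 1)
  · obtain ⟨i, hi, hne'⟩ := hsplit
    exact ⟨π₁ i, π₁ (i + 1), π₂ (i + 1), hne', hedge₁ i, hi ▸ hedge₂ i, hcol (i + 1)⟩
  · exfalso
    push_neg at hsplit
    apply hne
    obtain ⟨i₀, hi₀⟩ := hint
    obtain ⟨p₁, hp₁, hperiod₁⟩ := hper₁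
    obtain ⟨p₂, hp₂, hperiod₂⟩ := hper₂
    -- agreement propagates forward
    have key : ∀ n : ℕ, π₁ (i₀ + n) = π₂ (i₀ + n) := by
      intro n
      induction n with
      | zero => simpa using hi₀
      | succ n ih =>
          have := hsplit (i₀ + n) ih
          have hcast : (i₀ + (n + 1 : ℕ) : ℤ) = (i₀ + n) + 1 := by push_cast; ring
          rw [hcast]
          exact this
    funext i
    set P : ℤ := p₁ * p₂ with hP
    have hPpos : 0 < P := mul_pos hp₁ hp₂
    set k : ℤ := max (i₀ - i) 0 with hk
    have hk0 : 0 ≤ k := le_max_right _ _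
    have hge : i₀ ≤ i + k * P := by
      have h1 : i₀ - i ≤ k := le_max_left _ _
      have h2 : k ≤ k * P := le_mul_of_one_le_right hk0 hPpos
      linarith
    have h1 : π₁ (i + k * P) = π₁ i := by
      have : i + k * P = i + (k * p₂) * p₁ := by ring
      rw [this]; exact periodic_int_mul π₁ p₁ hperiod₁ (k * p₂) i
    have h2 : π₂ (i + k * P) = π₂ i := by
      have : i + k * P = i + (k * p₁) * p₂ := by ring
      rw [this]; exact periodic_int_mul π₂ p₂ hperiod₂ (k * p₁) i
    have hn : i + k * P = i₀ + ((i + k * P - i₀).toNat : ℤ) := by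
      rw [Int.toNat_of_nonneg (by linarith)]; ring
    have := key (i + k * P - i₀).toNat
    rw [← hn] at this
    rw [← h1, ← h2, this]
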